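/- The function R : [0, ∞) → [0, ∞), R(φ) = (1/Z(φ)) Σ_{k=0}^∞ k φ^k / g(k)!, is a strictly increasing bijection of [0, ∞) onto [0, ∞). -/

import Mathlib

set_option maxHeartbeats 1000000


/-- The "generalized factorial" `g(k)! = g(k) ⋯ g(1)`, with `g(0)! = 1`. -/
noncomputable def gFact (g : ℕ → ℝ) : ℕ → ℝ
  | 0 => 1
  | n + 1 => g (n + 1) * gFact g n

/-- The partition function `Z(φ) = Σ_{k=0}^∞ φ^k / g(k)!`. -/
noncomputable def Zfun (g : ℕ → ℝ) (φ : ℝ) : ℝ := ∑' k : ℕ, φ ^ k / gFact g k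

/-- The mean `R(φ) = (1/Z(φ)) Σ_{k=0}^∞ k φ^k / g(k)!`. -/
noncomputable def Rfun (g : ℕ → ℝ) (φ : ℝ) : ℝ :=
  (∑' k : ℕ, (k : ℝ) * φ ^ k / gFact g k) / Zfun g φ

section lemmas
variable {g : ℕ → ℝ} {Γm Γp : ℝ}

lemma g_lower (hΓm : 0 < Γm) (hg0 : g 0 = 0)
    (hg : ∀ k : ℕ, 1 ≤ k → Γm ≤ g k - g (k - 1) ∧ g k - g (k - 1) ≤ Γp) :
    ∀ k : ℕ, Γm * k ≤ g k := by
  intro k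
  induction k with
  | zero => simp [hg0]
  | succ n ih =>
    have h := (hg (n + 1) (by omega)).1
    simp only [Nat.add_sub_cancel] at h
    push_cast
    nlinarith

lemma g_upper (hg0 : g 0 = 0)
    (hg : ∀ k : ℕ, 1 ≤ k → Γm ≤ g k - g (k - 1) ∧ g k - g (k - 1) ≤ Γp) :
    ∀ k : ℕ, g k ≤ Γp * k := by
  intro k
  induction k with
  | zero => simp [hg0]
  | succ n ih =>
    have h := (hg (n + 1) (by omega)).2
    simp only [Nat.add_sub_cancel] at h
    push_cast
    nlinarith

lemma gFact_lower (hΓm : 0 < Γm) (hg0 : g 0 = 0)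
    (hg : ∀ k : ℕ, 1 ≤ k → Γm ≤ g k - g (k - 1) ∧ g k - g (k - 1) ≤ Γp) :
    ∀ k : ℕ, Γm ^ k * k.factorial ≤ gFact g k := by
  intro k
  induction k with
  | zero => simp [gFact]
  | succ n ih =>
    have h1 : Γm * (n + 1 : ℕ) ≤ g (n + 1) := g_lower hΓm hg0 hg (n + 1)
    have h2 : (0:ℝ) < Γm ^ n * n.factorial := by positivity
    have h3 : (0:ℝ) ≤ Γm * (n + 1 : ℕ) := by positivity
    calc Γm ^ (n+1) * (n+1).factorial = (Γm * (n+1:ℕ)) * (Γm ^ n * n.factorial) := by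
          rw [Nat.factorial_succ]; push_cast; ring
      _ ≤ g (n+1) * gFact g n := mul_le_mul h1 ih (le_of_lt h2) (h3.trans h1)
      _ = gFact g (n+1) := rfl

lemma gFact_pos (hΓm : 0 < Γm) (hg0 : g 0 = 0)
    (hg : ∀ k : ℕ, 1 ≤ k → Γm ≤ g k - g (k - 1) ∧ g k - g (k - 1) ≤ Γp) (k : ℕ) :
    0 < gFact g k :=
  lt_of_lt_of_le (by positivity) (gFact_lower hΓm hg0 hg k)

end lemmas
section summ
variable {g : ℕ → ℝ} {Γm Γp : ℝ}
variable (hΓm : 0 < Γm) (hg0 : g 0 = 0)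
    (hg : ∀ k : ℕ, 1 ≤ k → Γm ≤ g k - g (k - 1) ∧ g k - g (k - 1) ≤ Γp)
include hΓm hg0 hg

lemma term_le {φ : ℝ} (hφ : 0 ≤ φ) (k : ℕ) :
    φ ^ k / gFact g k ≤ (φ / Γm) ^ k / k.factorial := by
  have h0 : (0:ℝ) < Γm ^ k * k.factorial := by positivity
  calc φ ^ k / gFact g k ≤ φ ^ k / (Γm ^ k * k.factorial) :=
        div_le_div_of_nonneg_left (pow_nonneg hφ k) h0 (gFact_lower hΓm hg0 hg k)
    _ = (φ / Γm) ^ k / k.factorial := by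
        rw [div_pow]
        field_simp

lemma summable_Z {φ : ℝ} (hφ : 0 ≤ φ) : Summable (fun k : ℕ => φ ^ k / gFact g k) :=
  Summable.of_nonneg_of_le
    (fun k => div_nonneg (pow_nonneg hφ k) (gFact_pos hΓm hg0 hg k).le)
    (term_le hΓm hg0 hg hφ) (Real.summable_pow_div_factorial (φ / Γm))

lemma summable_N {φ : ℝ} (hφ : 0 ≤ φ) :
    Summable (fun k : ℕ => (k : ℝ) * φ ^ k / gFact g k) := by
  apply Summable.of_nonneg_of_le
    (fun k => div_nonneg (mul_nonneg (Nat.cast_nonneg k) (pow_nonneg hφ k)) (gFact_pos hΓm hg0 hg k).le)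
    (fun k => ?_) (Real.summable_pow_div_factorial (2 * φ / Γm))
  have hk : (k : ℝ) ≤ 2 ^ k := by exact_mod_cast (Nat.lt_two_pow_self (n := k)).le
  have hterm : (0:ℝ) ≤ φ ^ k / gFact g k :=
    div_nonneg (pow_nonneg hφ k) (gFact_pos hΓm hg0 hg k).le
  calc (k : ℝ) * φ ^ k / gFact g k = (k : ℝ) * (φ ^ k / gFact g k) := by ring
    _ ≤ 2 ^ k * (φ ^ k / gFact g k) := by gcongr
    _ ≤ 2 ^ k * ((φ / Γm) ^ k / k.factorial) := by
        have := term_le hΓm hg0 hg hφ k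
        gcongr
    _ = (2 * φ / Γm) ^ k / k.factorial := by
        rw [mul_div_assoc 2 φ, mul_pow, div_pow, ← mul_div_assoc]

lemma term_le_N {φ : ℝ} (hφ : 0 ≤ φ) (k : ℕ) :
    (k : ℝ) * φ ^ k / gFact g k ≤ (2 * φ / Γm) ^ k / k.factorial := by
  have hk : (k : ℝ) ≤ 2 ^ k := by exact_mod_cast (Nat.lt_two_pow_self (n := k)).le
  have hterm : (0:ℝ) ≤ φ ^ k / gFact g k :=
    div_nonneg (pow_nonneg hφ k) (gFact_pos hΓm hg0 hg k).le
  calc (k : ℝ) * φ ^ k / gFact g k = (k : ℝ) * (φ ^ k / gFact g k) := by ring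
    _ ≤ 2 ^ k * (φ ^ k / gFact g k) := by gcongr
    _ ≤ 2 ^ k * ((φ / Γm) ^ k / k.factorial) := by
        have := term_le hΓm hg0 hg hφ k
        gcongr
    _ = (2 * φ / Γm) ^ k / k.factorial := by
        rw [mul_div_assoc 2 φ, mul_pow, div_pow, ← mul_div_assoc]

lemma Z_pos {φ : ℝ} (hφ : 0 ≤ φ) : 0 < Zfun g φ := by
  apply Summable.tsum_pos (summable_Z hΓm hg0 hg hφ)
    (fun k => div_nonneg (pow_nonneg hφ k) (gFact_pos hΓm hg0 hg k).le) 0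
  simp [gFact]

lemma N_nonneg {φ : ℝ} (hφ : 0 ≤ φ) : 0 ≤ ∑' k : ℕ, (k : ℝ) * φ ^ k / gFact g k :=
  tsum_nonneg fun k =>
    div_nonneg (mul_nonneg (Nat.cast_nonneg k) (pow_nonneg hφ k)) (gFact_pos hΓm hg0 hg k).le

lemma R_nonneg {φ : ℝ} (hφ : 0 ≤ φ) : 0 ≤ Rfun g φ :=
  div_nonneg (N_nonneg hΓm hg0 hg hφ) (Z_pos hΓm hg0 hg hφ).le

end summ

lemma R_zero (g : ℕ → ℝ) : Rfun g 0 = 0 := by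
  have : ∀ k : ℕ, (k : ℝ) * (0:ℝ) ^ k / gFact g k = 0 := by
    intro k
    rcases Nat.eq_zero_or_pos k with h | h
    · simp [h]
    · rw [zero_pow (by omega)]; ring
  simp [Rfun, this]

lemma pow_cross {x y : ℝ} (hx : 0 ≤ x) (hxy : x ≤ y) {j k : ℕ} (hjk : j ≤ k) :
    x ^ k * y ^ j ≤ y ^ k * x ^ j := by
  obtain ⟨d, rfl⟩ := Nat.exists_eq_add_of_le hjk
  have hy : 0 ≤ y := hx.trans hxy
  rw [pow_add, pow_add]
  calc x ^ j * x ^ d * y ^ j = (x * y) ^ j * x ^ d := by rw [mul_pow]; ring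
    _ ≤ (x * y) ^ j * y ^ d := by
        have h1 : (0:ℝ) ≤ (x*y)^j := by positivity
        exact mul_le_mul_of_nonneg_left (pow_le_pow_left₀ hx hxy d) h1
    _ = y ^ j * y ^ d * x ^ j := by rw [mul_pow]; ring

section mono
variable {g : ℕ → ℝ} {Γm Γp : ℝ}
variable (hΓm : 0 < Γm) (hg0 : g 0 = 0)
    (hg : ∀ k : ℕ, 1 ≤ k → Γm ≤ g k - g (k - 1) ∧ g k - g (k - 1) ≤ Γp)
include hΓm hg0 hg

lemma cross_pos {x y : ℝ} (hx : 0 ≤ x) (hxy : x < y) :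
    (∑' k : ℕ, (k:ℝ) * x ^ k / gFact g k) * Zfun g y
      < (∑' k : ℕ, (k:ℝ) * y ^ k / gFact g k) * Zfun g x := by
  have hy : 0 ≤ y := hx.trans hxy.le
  set G : ℕ → ℝ := gFact g with hG
  have hGpos : ∀ k, 0 < G k := gFact_pos hΓm hg0 hg
  have hZx := summable_Z hΓm hg0 hg hx
  have hZy := summable_Z hΓm hg0 hg hy
  have hNx := summable_N hΓm hg0 hg hx
  have hNy := summable_N hΓm hg0 hg hy
  set F : ℕ × ℕ → ℝ := fun p =>
    (p.1:ℝ) * y ^ p.1 / G p.1 * (x ^ p.2 / G p.2)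
      - (p.1:ℝ) * x ^ p.1 / G p.1 * (y ^ p.2 / G p.2) with hF
  have nonnegZx : ∀ k : ℕ, 0 ≤ x ^ k / G k := fun k =>
    div_nonneg (pow_nonneg hx k) (hGpos k).le
  have nonnegZy : ∀ k : ℕ, 0 ≤ y ^ k / G k := fun k =>
    div_nonneg (pow_nonneg hy k) (hGpos k).le
  have nonnegNx : ∀ k : ℕ, 0 ≤ (k:ℝ) * x ^ k / G k := fun k =>
    div_nonneg (mul_nonneg (Nat.cast_nonneg k) (pow_nonneg hx k)) (hGpos k).le
  have nonnegNy : ∀ k : ℕ, 0 ≤ (k:ℝ) * y ^ k / G k := fun k =>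
    div_nonneg (mul_nonneg (Nat.cast_nonneg k) (pow_nonneg hy k)) (hGpos k).le
  have hS1 : Summable (fun p : ℕ × ℕ => (p.1:ℝ) * y ^ p.1 / G p.1 * (x ^ p.2 / G p.2)) :=
    hNy.mul_of_nonneg hZx nonnegNy nonnegZx
  have hS2 : Summable (fun p : ℕ × ℕ => (p.1:ℝ) * x ^ p.1 / G p.1 * (y ^ p.2 / G p.2)) :=
    hNx.mul_of_nonneg hZy nonnegNx nonnegZy
  have hSF : Summable F := hS1.sub hS2
  have key : (∑' k : ℕ, (k:ℝ) * y ^ k / G k) * Zfun g x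
      - (∑' k : ℕ, (k:ℝ) * x ^ k / G k) * Zfun g y = ∑' p, F p := by
    rw [hF]
    rw [show Zfun g x = ∑' k : ℕ, x ^ k / G k from rfl,
        show Zfun g y = ∑' k : ℕ, y ^ k / G k from rfl]
    rw [Summable.tsum_mul_tsum hNy hZx hS1, Summable.tsum_mul_tsum hNx hZy hS2]
    exact (Summable.tsum_sub hS1 hS2).symm
  have hswap : Summable (fun p : ℕ × ℕ => F p.swap) :=
    ((Equiv.prodComm ℕ ℕ).summable_iff).2 hSF
  have hsum_swap : ∑' p : ℕ × ℕ, F p.swap = ∑' p, F p :=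
    (Equiv.prodComm ℕ ℕ).tsum_eq F
  have hGnn : ∀ p : ℕ × ℕ, 0 ≤ F p + F p.swap := by
    intro ⟨k, j⟩
    have hform : F (k, j) + F (Prod.swap (k, j))
        = ((k:ℝ) - j) * (y ^ k * x ^ j - x ^ k * y ^ j) / (G k * G j) := by
      simp only [hF, Prod.swap, Prod.fst, Prod.snd]
      field_simp
      ring
    rw [hform]
    rcases le_total j k with h | h
    · apply div_nonneg _ (mul_nonneg (hGpos k).le (hGpos j).le)
      apply mul_nonneg
      · simp only [sub_nonneg]
        exact_mod_cast h
      · linarith [pow_cross hx hxy.le h]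
    · apply div_nonneg _ (mul_nonneg (hGpos k).le (hGpos j).le)
      have h1 : ((k:ℝ) - j) ≤ 0 := by
        simp only [sub_nonpos]
        exact_mod_cast h
      have h2 : y ^ k * x ^ j - x ^ k * y ^ j ≤ 0 := by
        have := pow_cross hx hxy.le h
        linarith
      nlinarith
    done
  have hpos10 : 0 < F (1, 0) + F (Prod.swap (1, 0)) := by
    have hG1 : G 1 = g 1 := by simp [hG, gFact]
    have hG0 : G 0 = 1 := by simp [hG, gFact]
    simp only [hF, Prod.swap, Prod.fst, Prod.snd, hG0, hG1]
    norm_num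
    have hg1 : 0 < g 1 := lt_of_lt_of_le hΓm (by have := (hg 1 (le_refl 1)).1; simp [hg0] at this; linarith)
    gcongr
  have htot : 0 < ∑' p : ℕ × ℕ, (F p + F p.swap) :=
    Summable.tsum_pos (hSF.add hswap) hGnn (1, 0) hpos10
  have h2 : ∑' p : ℕ × ℕ, (F p + F p.swap) = 2 * ∑' p, F p := by
    rw [Summable.tsum_add hSF hswap, hsum_swap, two_mul]
  have : 0 < ∑' p, F p := by linarith [h2 ▸ htot]
  linarith [key, this]

end mono

section cont
variable {g : ℕ → ℝ} {Γm Γp : ℝ}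
variable (hΓm : 0 < Γm) (hg0 : g 0 = 0)
    (hg : ∀ k : ℕ, 1 ≤ k → Γm ≤ g k - g (k - 1) ∧ g k - g (k - 1) ≤ Γp)
include hΓm hg0 hg

lemma contZ {M : ℝ} (hM : 0 ≤ M) :
    ContinuousOn (Zfun g) (Set.Icc 0 M) := by
  apply continuousOn_tsum (u := fun k : ℕ => (M / Γm) ^ k / k.factorial)
    (fun k => (Continuous.continuousOn (by continuity)))
    (Real.summable_pow_div_factorial (M / Γm))
  intro k φ hφ
  rw [Real.norm_eq_abs, abs_of_nonneg (div_nonneg (pow_nonneg hφ.1 k) (gFact_pos hΓm hg0 hg k).le)]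
  calc φ ^ k / gFact g k ≤ M ^ k / gFact g k := by
        gcongr
        · exact (gFact_pos hΓm hg0 hg k).le
        · exact hφ.1
        · exact hφ.2
    _ ≤ (M / Γm) ^ k / k.factorial := term_le hΓm hg0 hg hM k

lemma contN {M : ℝ} (hM : 0 ≤ M) :
    ContinuousOn (fun φ => ∑' k : ℕ, (k:ℝ) * φ ^ k / gFact g k) (Set.Icc 0 M) := by
  apply continuousOn_tsum (u := fun k : ℕ => (2 * M / Γm) ^ k / k.factorial)
    (fun k => (Continuous.continuousOn (by continuity)))
    (Real.summable_pow_div_factorial (2 * M / Γm))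
  intro k φ hφ
  rw [Real.norm_eq_abs, abs_of_nonneg
    (div_nonneg (mul_nonneg (Nat.cast_nonneg k) (pow_nonneg hφ.1 k)) (gFact_pos hΓm hg0 hg k).le)]
  calc (k:ℝ) * φ ^ k / gFact g k ≤ (k:ℝ) * M ^ k / gFact g k := by
        gcongr
        · exact (gFact_pos hΓm hg0 hg k).le
        · exact hφ.1
        · exact hφ.2
    _ ≤ (2 * M / Γm) ^ k / k.factorial := term_le_N hΓm hg0 hg hM k

lemma contR {M : ℝ} (hM : 0 ≤ M) :
    ContinuousOn (Rfun g) (Set.Icc 0 M) := by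
  apply ContinuousOn.div (contN hΓm hg0 hg hM) (contZ hΓm hg0 hg hM)
  exact fun φ hφ => (Z_pos hΓm hg0 hg hφ.1).ne'

end cont

section unbdd
variable {g : ℕ → ℝ} {Γm Γp : ℝ}
variable (hΓm : 0 < Γm) (hg0 : g 0 = 0)
    (hg : ∀ k : ℕ, 1 ≤ k → Γm ≤ g k - g (k - 1) ∧ g k - g (k - 1) ≤ Γp)
include hΓm hg0 hg

lemma R_large (C : ℝ) : ∃ φ : ℝ, 0 ≤ φ ∧ C < Rfun g φ := by
  obtain ⟨n₀, hn₀⟩ := exists_nat_gt (C + 1)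
  set n : ℕ := max n₀ 1 with hndef
  have hn1 : 1 ≤ n := le_max_right _ _
  have hnC : C + 1 < (n : ℝ) := lt_of_lt_of_le hn₀ (by exact_mod_cast le_max_left n₀ 1)
  have hGpos := gFact_pos hΓm hg0 hg
  set A : ℝ := ∑ k ∈ Finset.range n, 1 / gFact g k with hAdef
  have hA0 : 0 ≤ A := Finset.sum_nonneg fun k _ => one_div_nonneg.2 (hGpos k).le
  set φ : ℝ := n * A * gFact g n + 1 with hφdef
  have hprod : 0 ≤ (n:ℝ) * A * gFact g n := mul_nonneg (mul_nonneg (Nat.cast_nonneg n) hA0) (hGpos n).le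
  have hφ1 : 1 ≤ φ := by rw [hφdef]; linarith
  have hφ0 : 0 ≤ φ := by linarith
  have hφpos : 0 < φ := by linarith
  refine ⟨φ, hφ0, ?_⟩
  have hZ := summable_Z hΓm hg0 hg hφ0
  have hNs := summable_N hΓm hg0 hg hφ0
  have hZpos := Z_pos hΓm hg0 hg hφ0
  set Z : ℝ := Zfun g φ with hZdef
  set S : ℝ := ∑ k ∈ Finset.range n, φ ^ k / gFact g k with hSdef
  have hS0 : 0 ≤ S := Finset.sum_nonneg fun k _ =>
    div_nonneg (pow_nonneg hφ0 k) (hGpos k).le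
  -- Step 1 : n Z - n S ≤ N
  have hstep1 : (n:ℝ) * Z - (n:ℝ) * S ≤ ∑' k : ℕ, (k:ℝ) * φ ^ k / gFact g k := by
    set ind : ℕ → ℝ := fun k => if k ∈ Finset.range n then (n:ℝ) * (φ ^ k / gFact g k) else 0
      with hinddef
    have hind0 : ∀ k ∉ Finset.range n, ind k = 0 := fun k hk => by simp only [hinddef]; exact if_neg hk
    have hindsum : Summable ind := summable_of_ne_finset_zero hind0
    have hmul : Summable (fun k : ℕ => (n:ℝ) * (φ ^ k / gFact g k)) := hZ.mul_left _
    have hle : ∀ k : ℕ, (n:ℝ) * (φ ^ k / gFact g k) - ind k ≤ (k:ℝ) * φ ^ k / gFact g k := by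
      intro k
      rw [hinddef]
      by_cases h : k ∈ Finset.range n
      · simp only [h, if_pos]
        have : (0:ℝ) ≤ (k:ℝ) * φ ^ k / gFact g k :=
          div_nonneg (mul_nonneg (Nat.cast_nonneg k) (pow_nonneg hφ0 k)) (hGpos k).le
        linarith
      · simp only [h, if_neg, not_false_iff, sub_zero]
        rw [Finset.mem_range, not_lt] at h
        have hnk : (n:ℝ) ≤ (k:ℝ) := by exact_mod_cast h
        rw [mul_div_assoc]
        have hnn : (0:ℝ) ≤ φ ^ k / gFact g k :=
          div_nonneg (pow_nonneg hφ0 k) (hGpos k).le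
        exact mul_le_mul_of_nonneg_right hnk hnn
    have h2 := Summable.tsum_le_tsum hle (hmul.sub hindsum) hNs
    rw [Summable.tsum_sub hmul hindsum, tsum_mul_left, tsum_eq_sum hind0] at h2
    have hindsumval : ∑ k ∈ Finset.range n, ind k = (n:ℝ) * S := by
      rw [hSdef, Finset.mul_sum]
      apply Finset.sum_congr rfl
      intro k hk
      simp only [hinddef, if_pos hk]
    rw [hindsumval] at h2
    exact h2
  -- Step 2 : φ ^ n / gFact g n ≤ Z
  have hZge : φ ^ n / gFact g n ≤ Z :=
    Summable.le_tsum hZ n fun j _ => div_nonneg (pow_nonneg hφ0 j) (hGpos j).le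
  -- Step 3 : S ≤ A * φ ^ (n - 1)
  obtain ⟨m, hm⟩ : ∃ m, n = m + 1 := ⟨n - 1, by omega⟩
  have hSle : S ≤ A * φ ^ m := by
    rw [hSdef, hAdef, Finset.sum_mul]
    apply Finset.sum_le_sum
    intro k hk
    rw [Finset.mem_range, hm] at hk
    have hkm : k ≤ m := by omega
    have hpow : φ ^ k ≤ φ ^ m := pow_le_pow_right₀ hφ1 hkm
    calc φ ^ k / gFact g k ≤ φ ^ m / gFact g k := by gcongr; exact (hGpos k).le
      _ = 1 / gFact g k * φ ^ m := by ring
  -- Step 4 : n * S / Z < 1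
  have hq : (n:ℝ) * S / Z ≤ (n:ℝ) * A * gFact g n / φ := by
    have hd : 0 < φ ^ n / gFact g n := div_pos (pow_pos hφpos n) (hGpos n)
    calc (n:ℝ) * S / Z ≤ (n:ℝ) * (A * φ ^ m) / (φ ^ n / gFact g n) := by
          apply div_le_div₀ (by positivity) _ hd hZge
          exact mul_le_mul_of_nonneg_left hSle (Nat.cast_nonneg n)
      _ = (n:ℝ) * A * gFact g n / φ := by
          rw [hm, pow_succ]
          field_simp
  have hlt : (n:ℝ) * A * gFact g n / φ < 1 := by
    rw [div_lt_one hφpos, hφdef]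
    linarith
  -- Conclusion
  have hfinal : (n:ℝ) - (n:ℝ) * S / Z ≤ Rfun g φ := by
    have : ((n:ℝ) * Z - (n:ℝ) * S) / Z ≤ Rfun g φ := by
      rw [Rfun]
      exact (div_le_div_iff_of_pos_right hZpos).2 hstep1
    calc (n:ℝ) - (n:ℝ) * S / Z = ((n:ℝ) * Z - (n:ℝ) * S) / Z := by
          rw [eq_div_iff hZpos.ne']
          field_simp
      _ ≤ Rfun g φ := this
  linarith

end unbdd


/-- the function `R : [0,∞) → [0,∞)` is a strictly increasing
bijection of `[0,∞)` onto `[0,∞)`. -/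
theorem zrp_density_bijection
    (g : ℕ → ℝ) (Γm Γp : ℝ)
    (hΓm : 0 < Γm) (hΓm1 : Γm ≤ 1) (hΓp : 1 ≤ Γp)
    (hg0 : g 0 = 0)
    (hg : ∀ k : ℕ, 1 ≤ k → Γm ≤ g k - g (k - 1) ∧ g k - g (k - 1) ≤ Γp) :
    StrictMonoOn (Rfun g) (Set.Ici 0) ∧
    Set.BijOn (Rfun g) (Set.Ici 0) (Set.Ici 0) := by
  have hmono : StrictMonoOn (Rfun g) (Set.Ici 0) := by
    intro x hx y hy hxy
    have hx0 : (0:ℝ) ≤ x := hx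
    have hy0 : (0:ℝ) ≤ y := hx0.trans hxy.le
    rw [Rfun, Rfun, div_lt_div_iff₀ (Z_pos hΓm hg0 hg hx0) (Z_pos hΓm hg0 hg hy0)]
    exact cross_pos hΓm hg0 hg hx0 hxy
  refine ⟨hmono, fun x hx => R_nonneg hΓm hg0 hg hx, hmono.injOn, ?_⟩
  intro y hy
  obtain ⟨φ₀, hφ₀, hyφ⟩ := R_large hΓm hg0 hg y
  have hcont := contR hΓm hg0 hg hφ₀
  have h0 : Rfun g 0 = 0 := R_zero g
  have hmem : y ∈ Set.Icc (Rfun g 0) (Rfun g φ₀) := ⟨by rw [h0]; exact hy, hyφ.le⟩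
  obtain ⟨x, hx, hxy⟩ := intermediate_value_Icc hφ₀ hcont hmem
  exact ⟨x, hx.1, hxy⟩
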